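/- There exists B₀ ≥ 1 such that for every B ≥ B₀ and every y ∈ ℝ: (i) 0 ≤ y sinh(y) e^{|y|/(4B)} ≤ (1/3) (1 + cosh(y)/√3)³, and (ii) |y| e^{|y|/(4B)} ≤ (2/3) |sinh(y)| (1 + cosh(y)/√3). -/

import Mathlib

open Real

-- polynomial inequality for part (i), with √3 replaced by rational bounds
private lemma key1 (v : ℝ) (hv : 1 ≤ v) :
    (3132/10000) * v^3 * ((v^2-1) * (v^4-1) * (199+v)) ≤
      (v^4 + (346/100)*v^2 + 1)^3 := by
  have hx : (0:ℝ) ≤ v - 1 := by linarith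
  nlinarith [pow_nonneg hx 2, pow_nonneg hx 3, pow_nonneg hx 4, pow_nonneg hx 5,
    pow_nonneg hx 6, pow_nonneg hx 7, pow_nonneg hx 8, pow_nonneg hx 9,
    pow_nonneg hx 10, pow_nonneg hx 11, pow_nonneg hx 12,
    mul_nonneg (pow_nonneg hx 3) (sq_nonneg ((v-1)^2 - 1)),
    mul_nonneg (pow_nonneg hx 2) (sq_nonneg ((v-1)^3 - 1)),
    mul_nonneg (pow_nonneg hx 4) (sq_nonneg ((v-1)^2 - 1)),
    mul_nonneg (pow_nonneg hx 3) (sq_nonneg ((v-1)^3 - 1))]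

-- polynomial inequality for part (ii)
private lemma key2 (v : ℝ) (hv : 1 ≤ v) :
    (1044/100) * v^4 * ((v^2-1) * (199+v)) ≤
      200 * v * ((v^4-1) * (v^4 + (346/100)*v^2 + 1)) := by
  have hx : (0:ℝ) ≤ v - 1 := by linarith
  nlinarith [pow_nonneg hx 2, pow_nonneg hx 3, pow_nonneg hx 4, pow_nonneg hx 5,
    pow_nonneg hx 6, pow_nonneg hx 7, pow_nonneg hx 8, pow_nonneg hx 9]

private lemma sqrt3_lb : (173/100 : ℝ) ≤ Real.sqrt 3 := by
  nlinarith [Real.sq_sqrt (by norm_num : (0:ℝ) ≤ 3), Real.sqrt_nonneg 3]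

private lemma sqrt3_ub : Real.sqrt 3 ≤ (174/100 : ℝ) := by
  nlinarith [Real.sq_sqrt (by norm_num : (0:ℝ) ≤ 3), Real.sqrt_nonneg 3]

set_option maxHeartbeats 1000000 in
theorem stmt_16 :
    ∃ B₀ : ℝ, 1 ≤ B₀ ∧
      ∀ B : ℝ, B₀ ≤ B → ∀ y : ℝ,
        (0 ≤ y * Real.sinh y * Real.exp (|y| / (4 * B)) ∧
          y * Real.sinh y * Real.exp (|y| / (4 * B)) ≤
            (1 / 3) * (1 + Real.cosh y / Real.sqrt 3) ^ 3) ∧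
        |y| * Real.exp (|y| / (4 * B)) ≤
          (2 / 3) * |Real.sinh y| * (1 + Real.cosh y / Real.sqrt 3) := by
  refine ⟨100, by norm_num, fun B hB y => ?_⟩
  have hB1 : (100:ℝ) ≤ B := hB
  set t : ℝ := |y| with ht_def
  have ht : 0 ≤ t := abs_nonneg y
  set r : ℝ := Real.sqrt 3 with hr_def
  have hr2 : r^2 = 3 := Real.sq_sqrt (by norm_num)
  have hrlb : (173/100 : ℝ) ≤ r := sqrt3_lb
  have hrub : r ≤ (174/100 : ℝ) := sqrt3_ub
  have hr0 : (0:ℝ) < r := by linarith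
  have hr3 : r^3 = 3*r := by rw [pow_succ, hr2]
  -- rewrite in terms of t = |y|
  have hysinh : y * Real.sinh y = t * Real.sinh t := by
    rcases le_or_gt 0 y with h | h
    · rw [ht_def, abs_of_nonneg h]
    · rw [ht_def, abs_of_neg h, Real.sinh_neg]; ring
  have hcoshy : Real.cosh y = Real.cosh t := (Real.cosh_abs y).symm
  have habs_sinh : |Real.sinh y| = Real.sinh t := Real.abs_sinh y
  -- v = exp(t/2)
  set v : ℝ := Real.exp (t/2) with hv_def
  have hv : 1 ≤ v := Real.one_le_exp (by linarith)
  have hv0 : (0:ℝ) < v := by linarith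
  have hv2 : Real.exp t = v^2 := by
    rw [hv_def, pow_two, ← Real.exp_add]
    congr 1; ring
  have hvneg : Real.exp (-t) = 1/v^2 := by
    rw [Real.exp_neg, hv2, one_div]
  have hsinh : Real.sinh t = (v^2 - 1/v^2)/2 := by
    rw [Real.sinh_eq, hv2, hvneg]
  have hcosh : Real.cosh t = (v^2 + 1/v^2)/2 := by
    rw [Real.cosh_eq, hv2, hvneg]
  have hsinh_nonneg : 0 ≤ Real.sinh t := Real.sinh_nonneg_iff.2 ht
  -- t ≤ v - 1/v
  have ht_le : t ≤ v - 1/v := by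
    have h1 : t/2 ≤ Real.sinh (t/2) := Real.self_le_sinh_iff.2 (by linarith)
    have h2 : Real.sinh (t/2) = (v - 1/v)/2 := by
      rw [Real.sinh_eq, hv_def, Real.exp_neg, one_div]
    rw [h2] at h1; linarith
  have hvv : 0 ≤ v - 1/v := by
    have : 1/v ≤ 1 := by
      rw [div_le_one hv0]; exact hv
    linarith
  have hv21 : (0:ℝ) ≤ v^2 - 1 := by nlinarith
  have hv41 : (0:ℝ) ≤ v^4 - 1 := by nlinarith
  -- exp factor bound
  have hE : Real.exp (t/(4*B)) ≤ (199 + v)/200 := by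
    have h1 : t/(4*B) ≤ t/400 := by
      gcongr <;> linarith
    have hp : Real.exp (t/400) ^ (200:ℕ) = v := by
      rw [hv_def, ← Real.exp_nat_mul]
      norm_num
      ring
    have hber : v ≤ ((199+v)/200)^(200:ℕ) := by
      have h := one_add_mul_le_pow (a := (v-1)/200) (by linarith) 200
      calc v = 1 + 200*((v-1)/200) := by ring
        _ ≤ (1+(v-1)/200)^(200:ℕ) := by exact_mod_cast h
        _ = ((199+v)/200)^(200:ℕ) := by congr 1; ring
    calc Real.exp (t/(4*B)) ≤ Real.exp (t/400) := Real.exp_le_exp.2 h1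
      _ ≤ (199+v)/200 := by
          apply le_of_pow_le_pow_left₀ (n := 200) (by norm_num) (by positivity)
          rw [hp]; exact hber
  have hE0 : 0 < Real.exp (t/(4*B)) := Real.exp_pos _
  have hf0 : (0:ℝ) ≤ (199+v)/200 := by positivity
  -- part (i) upper bound
  have part1 : t * Real.sinh t * Real.exp (t/(4*B)) ≤
      (1/3) * (1 + Real.cosh t / r)^3 := by
    have step1 : t * Real.sinh t * Real.exp (t/(4*B)) ≤
        (v - 1/v) * ((v^2 - 1/v^2)/2) * ((199+v)/200) := by
      rw [hsinh]
      have hs2 : 0 ≤ (v^2 - 1/v^2)/2 := by rw [← hsinh]; exact hsinh_nonneg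
      apply mul_le_mul (mul_le_mul ht_le le_rfl hs2 hvv) hE (le_of_lt hE0)
      positivity
    have e1 : (v - 1/v) * ((v^2 - 1/v^2)/2) * ((199+v)/200)
        = ((v^2-1) * (v^4-1) * (199+v)) / (400*v^3) := by
      field_simp; ring
    have e2 : (1/3) * (1 + ((v^2 + 1/v^2)/2) / r)^3
        = (v^4 + 2*r*v^2 + 1)^3 / (24*r^3*v^6) := by
      field_simp; ring
    have hP : 0 ≤ (v^2-1) * (v^4-1) * (199+v) := by
      apply mul_nonneg (mul_nonneg hv21 hv41); linarith
    have hb : (v^4 + (346/100)*v^2 + 1)^3 ≤ (v^4 + 2*r*v^2 + 1)^3 := by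
      apply pow_le_pow_left₀ (by positivity)
      nlinarith [mul_le_mul_of_nonneg_right hrlb (sq_nonneg v)]
    have hk := key1 v hv
    have hQ1 : (0:ℝ) ≤ 72*v^6*((v^2-1) * (v^4-1) * (199+v)) :=
      mul_nonneg (by positivity) hP
    have main : (v^2-1) * (v^4-1) * (199+v) * (24*r^3*v^6)
        ≤ (v^4 + 2*r*v^2 + 1)^3 * (400*v^3) := by
      calc (v^2-1) * (v^4-1) * (199+v) * (24*r^3*v^6)
          = (24*v^6*((v^2-1) * (v^4-1) * (199+v))) * r^3 := by ring
        _ = (72*v^6*((v^2-1) * (v^4-1) * (199+v))) * r := by rw [hr3]; ring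
        _ ≤ (72*v^6*((v^2-1) * (v^4-1) * (199+v))) * (174/100) :=
            mul_le_mul_of_nonneg_left hrub hQ1
        _ = 400 * v^3 * ((3132/10000) * v^3 * ((v^2-1) * (v^4-1) * (199+v))) := by ring
        _ ≤ 400 * v^3 * (v^4 + (346/100)*v^2 + 1)^3 :=
            mul_le_mul_of_nonneg_left hk (by positivity)
        _ ≤ 400 * v^3 * (v^4 + 2*r*v^2 + 1)^3 :=
            mul_le_mul_of_nonneg_left hb (by positivity)
        _ = (v^4 + 2*r*v^2 + 1)^3 * (400*v^3) := by ring
    calc t * Real.sinh t * Real.exp (t/(4*B))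
        ≤ (v - 1/v) * ((v^2 - 1/v^2)/2) * ((199+v)/200) := step1
      _ = ((v^2-1) * (v^4-1) * (199+v)) / (400*v^3) := e1
      _ ≤ (v^4 + 2*r*v^2 + 1)^3 / (24*r^3*v^6) := by
          rw [div_le_div_iff₀ (by positivity) (by positivity)]
          exact main
      _ = (1/3) * (1 + ((v^2 + 1/v^2)/2) / r)^3 := e2.symm
      _ = (1/3) * (1 + Real.cosh t / r)^3 := by rw [hcosh]
  -- part (ii)
  have part2 : t * Real.exp (t/(4*B)) ≤
      (2/3) * Real.sinh t * (1 + Real.cosh t / r) := by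
    have step1 : t * Real.exp (t/(4*B)) ≤ (v - 1/v) * ((199+v)/200) := by
      apply mul_le_mul ht_le hE (le_of_lt hE0) hvv
    have e1 : (v - 1/v) * ((199+v)/200) = ((v^2-1) * (199+v)) / (200*v) := by
      field_simp
    have e2 : (2/3) * ((v^2 - 1/v^2)/2) * (1 + ((v^2 + 1/v^2)/2) / r)
        = ((v^4-1) * (v^4 + 2*r*v^2 + 1)) / (6*r*v^4) := by
      field_simp; ring
    have hk := key2 v hv
    have hb : (v^4-1) * (v^4 + (346/100)*v^2 + 1) ≤ (v^4-1) * (v^4 + 2*r*v^2 + 1) := by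
      apply mul_le_mul_of_nonneg_left _ hv41
      nlinarith [mul_le_mul_of_nonneg_right hrlb (sq_nonneg v)]
    have hQ2 : (0:ℝ) ≤ 6*v^4*((v^2-1) * (199+v)) :=
      mul_nonneg (by positivity) (mul_nonneg hv21 (by linarith))
    have main : (v^2-1) * (199+v) * (6*r*v^4)
        ≤ (v^4-1) * (v^4 + 2*r*v^2 + 1) * (200*v) := by
      calc (v^2-1) * (199+v) * (6*r*v^4)
          = (6*v^4*((v^2-1) * (199+v))) * r := by ring
        _ ≤ (6*v^4*((v^2-1) * (199+v))) * (174/100) :=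
            mul_le_mul_of_nonneg_left hrub hQ2
        _ = (1044/100) * v^4 * ((v^2-1) * (199+v)) := by ring
        _ ≤ 200 * v * ((v^4-1) * (v^4 + (346/100)*v^2 + 1)) := hk
        _ ≤ 200 * v * ((v^4-1) * (v^4 + 2*r*v^2 + 1)) :=
            mul_le_mul_of_nonneg_left hb (by positivity)
        _ = (v^4-1) * (v^4 + 2*r*v^2 + 1) * (200*v) := by ring
    calc t * Real.exp (t/(4*B)) ≤ (v - 1/v) * ((199+v)/200) := step1
      _ = ((v^2-1) * (199+v)) / (200*v) := e1
      _ ≤ ((v^4-1) * (v^4 + 2*r*v^2 + 1)) / (6*r*v^4) := by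
          rw [div_le_div_iff₀ (by positivity) (by positivity)]
          exact main
      _ = (2/3) * ((v^2 - 1/v^2)/2) * (1 + ((v^2 + 1/v^2)/2) / r) := e2.symm
      _ = (2/3) * Real.sinh t * (1 + Real.cosh t / r) := by rw [hsinh, hcosh]
  refine ⟨⟨?_, ?_⟩, ?_⟩
  · rw [hysinh]
    have := Real.exp_pos (t/(4*B))
    positivity
  · rw [hysinh, hcoshy]; exact part1
  · rw [habs_sinh, hcoshy]; exact part2
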